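/- arXiv:1506.06266 — 2 statements merged into one kernel-verified Lean document; each statement's English description precedes it below -/
import Mathlib

section
/- Let F̄_{σ²}^{[a,b]}(x) = (Φ(b/σ) − Φ(x/σ))/(Φ(b/σ) − Φ(a/σ)) denote the survival function of a N(0, σ²) random variable truncated to [a, b], where 0 ≤ a < b. Then for any 0 < σ₁² < σ₂² and any x with a < x < b, F̄_{σ₁²}^{[a,b]}(x) < F̄_{σ₂²}^{[a,b]}(x); i.e., the truncated Gaussian survival function is strictly increasing in the variance parameter when the truncation interval lies to the right of zero. -/
open Real MeasureTheory intervalIntegral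

noncomputable def stdNormalPDF (x : ℝ) : ℝ := Real.exp (-(x ^ 2) / 2) / Real.sqrt (2 * Real.pi)

noncomputable def stdNormalCDF (x : ℝ) : ℝ := ∫ t in Set.Iic x, stdNormalPDF t

/-- Survival function of a `N(0, σ²)` random variable truncated to `[a, b]`. -/
noncomputable def truncGaussSurvival (σ a b x : ℝ) : ℝ :=
  (stdNormalCDF (b / σ) - stdNormalCDF (x / σ)) /
    (stdNormalCDF (b / σ) - stdNormalCDF (a / σ))

lemma pdf_pos (x : ℝ) : 0 < stdNormalPDF x := by
  unfold stdNormalPDF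
  positivity

lemma pdf_cont : Continuous stdNormalPDF := by
  unfold stdNormalPDF
  fun_prop

lemma pdf_integrable : Integrable stdNormalPDF := by
  have h : Integrable (fun x : ℝ => Real.exp (-(1/2 : ℝ) * x ^ 2)) :=
    integrable_exp_neg_mul_sq (by norm_num)
  have := h.div_const (Real.sqrt (2 * Real.pi))
  convert this using 2 with t
  · unfold stdNormalPDF
    ring_nf

lemma cdf_sub (u v : ℝ) :
    stdNormalCDF u - stdNormalCDF v = ∫ t in v..u, stdNormalPDF t := by
  unfold stdNormalCDF
  exact intervalIntegral.integral_Iic_sub_Iic pdf_integrable.integrableOn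
    pdf_integrable.integrableOn

lemma cdf_sub_div (σ u v : ℝ) (hσ : 0 < σ) :
    stdNormalCDF (u / σ) - stdNormalCDF (v / σ)
      = σ⁻¹ * ∫ t in v..u, stdNormalPDF (t / σ) := by
  rw [cdf_sub, ← intervalIntegral.inv_mul_integral_comp_div]

lemma pdf_ratio (σ₁ σ₂ s : ℝ) (h1 : 0 < σ₁) (h2 : 0 < σ₂) :
    stdNormalPDF (s / σ₁)
      = Real.exp (-((σ₁ ^ 2)⁻¹ - (σ₂ ^ 2)⁻¹) / 2 * s ^ 2) * stdNormalPDF (s / σ₂) := by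
  unfold stdNormalPDF
  rw [div_pow, div_pow]
  have h : -(s ^ 2 / σ₁ ^ 2) / 2
      = -((σ₁ ^ 2)⁻¹ - (σ₂ ^ 2)⁻¹) / 2 * s ^ 2 + -(s ^ 2 / σ₂ ^ 2) / 2 := by
    field_simp
    ring
  rw [h, Real.exp_add, mul_div_assoc]

theorem truncGauss_survival_strictMono_in_variance
    (a b x σ₁ σ₂ : ℝ) (ha : 0 ≤ a) (hab : a < b) (hax : a < x) (hxb : x < b)
    (hσ₁ : 0 < σ₁) (hσ₁₂ : σ₁ < σ₂) :
    truncGaussSurvival σ₁ a b x < truncGaussSurvival σ₂ a b x := by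
  have hσ₂ : 0 < σ₂ := hσ₁.trans hσ₁₂
  have hx0 : 0 < x := ha.trans_lt hax
  set c : ℝ := ((σ₁ ^ 2)⁻¹ - (σ₂ ^ 2)⁻¹) / 2 with hc
  have hcpos : 0 < c := by
    have h1 : (0:ℝ) < σ₁ ^ 2 := by positivity
    have h2 : σ₁ ^ 2 < σ₂ ^ 2 := by nlinarith
    have : (σ₂ ^ 2)⁻¹ < (σ₁ ^ 2)⁻¹ := inv_strictAnti₀ h1 h2
    simp only [hc]
    linarith
  have contc : Continuous (fun s : ℝ => Real.exp (-c * s ^ 2)) :=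
    Real.continuous_exp.comp (continuous_const.mul (continuous_pow 2))
  set k : ℝ := Real.exp (-c * x ^ 2) with hk
  set A₁ : ℝ := ∫ s in a..x, stdNormalPDF (s / σ₁) with hA₁
  set A₂ : ℝ := ∫ s in a..x, stdNormalPDF (s / σ₂) with hA₂
  set B₁ : ℝ := ∫ t in x..b, stdNormalPDF (t / σ₁) with hB₁
  set B₂ : ℝ := ∫ t in x..b, stdNormalPDF (t / σ₂) with hB₂
  have contdiv : ∀ σ : ℝ, Continuous (fun s : ℝ => stdNormalPDF (s / σ)) := fun σ =>
    pdf_cont.comp (continuous_id.div_const σ)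
  have intdiv : ∀ (σ u v : ℝ), IntervalIntegrable (fun s : ℝ => stdNormalPDF (s / σ)) volume u v :=
    fun σ u v => (contdiv σ).intervalIntegrable u v
  -- positivity of the pieces
  have hA₂pos : 0 < A₂ := intervalIntegral_pos_of_pos_on (intdiv σ₂ a x)
    (fun s _ => pdf_pos _) hax
  have hB₂pos : 0 < B₂ := intervalIntegral_pos_of_pos_on (intdiv σ₂ x b)
    (fun t _ => pdf_pos _) hxb
  have hA₁pos : 0 < A₁ := intervalIntegral_pos_of_pos_on (intdiv σ₁ a x)
    (fun s _ => pdf_pos _) hax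
  have hB₁pos : 0 < B₁ := intervalIntegral_pos_of_pos_on (intdiv σ₁ x b)
    (fun t _ => pdf_pos _) hxb
  -- key inequality 1 : k * A₂ < A₁
  have key1 : k * A₂ < A₁ := by
    rw [← sub_pos]
    have heq : A₁ - k * A₂
        = ∫ s in a..x, (Real.exp (-c * s ^ 2) - k) * stdNormalPDF (s / σ₂) := by
      rw [hA₁, hA₂, ← intervalIntegral.integral_const_mul, ← intervalIntegral.integral_sub]
      · congr 1
        ext s
        rw [pdf_ratio σ₁ σ₂ s hσ₁ hσ₂]
        rw [hc]
        ring_nf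
      · exact intdiv σ₁ a x
      · exact (continuous_const.mul (contdiv σ₂)).intervalIntegrable a x
    rw [heq]
    apply intervalIntegral_pos_of_pos_on
    · exact ((contc.sub continuous_const).mul (contdiv σ₂)).intervalIntegrable a x
    · intro s hs
      apply mul_pos _ (pdf_pos _)
      rw [sub_pos, hk]
      apply Real.exp_lt_exp.2
      have hs0 : 0 ≤ s := ha.trans hs.1.le
      have hsq : s ^ 2 < x ^ 2 := by nlinarith [hs.2]
      nlinarith [mul_lt_mul_of_pos_left hsq hcpos]
    · exact hax
  -- key inequality 2 : B₁ < k * B₂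
  have key2 : B₁ < k * B₂ := by
    rw [← sub_pos]
    have heq : k * B₂ - B₁
        = ∫ t in x..b, (k - Real.exp (-c * t ^ 2)) * stdNormalPDF (t / σ₂) := by
      rw [hB₁, hB₂, ← intervalIntegral.integral_const_mul, ← intervalIntegral.integral_sub]
      · congr 1
        ext t
        rw [pdf_ratio σ₁ σ₂ t hσ₁ hσ₂]
        rw [hc]
        ring_nf
      · exact (continuous_const.mul (contdiv σ₂)).intervalIntegrable x b
      · exact intdiv σ₁ x b
    rw [heq]
    apply intervalIntegral_pos_of_pos_on
    · exact ((continuous_const.sub contc).mul (contdiv σ₂)).intervalIntegrable x b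
    · intro t ht
      apply mul_pos _ (pdf_pos _)
      rw [sub_pos, hk]
      apply Real.exp_lt_exp.2
      have hsq : x ^ 2 < t ^ 2 := by nlinarith [ht.1]
      nlinarith [mul_lt_mul_of_pos_left hsq hcpos]
    · exact hxb
  -- rewrite the survival functions
  have split : ∀ σ : ℝ, (∫ t in a..b, stdNormalPDF (t / σ))
      = (∫ s in a..x, stdNormalPDF (s / σ)) + ∫ t in x..b, stdNormalPDF (t / σ) :=
    fun σ => (intervalIntegral.integral_add_adjacent_intervals (intdiv σ a x) (intdiv σ x b)).symm
  have hform : ∀ σ : ℝ, 0 < σ → truncGaussSurvival σ a b x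
      = (∫ t in x..b, stdNormalPDF (t / σ))
        / ((∫ s in a..x, stdNormalPDF (s / σ)) + ∫ t in x..b, stdNormalPDF (t / σ)) := by
    intro σ hσ
    unfold truncGaussSurvival
    rw [cdf_sub_div σ b x hσ, cdf_sub_div σ b a hσ, split σ,
      mul_div_mul_left _ _ (inv_ne_zero hσ.ne')]
  rw [hform σ₁ hσ₁, hform σ₂ hσ₂, ← hA₁, ← hA₂, ← hB₁, ← hB₂,
    div_lt_div_iff₀ (by linarith) (by linarith)]
  nlinarith [mul_lt_mul_of_pos_right key2 hA₂pos, mul_lt_mul_of_pos_right key1 hB₂pos]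
end

section
/- Let each of d columns contain m i.i.d. draws from the mixture π·N(−B,1) + (1−2π)·N(0,1) + π·N(B,1), independent across columns. Let N_j be the number of draws in column j from the N(B,1) component and N'_j the number from the N(0,1) component. If π^m = 1/d, then the probability that exactly one column j has N_j = m while every other column ℓ has N'_ℓ ≥ m − 2πmd is at least (1 − 1/d)^{d−1}, hence at least approaching 1/e as d → ∞. -/
open MeasureTheory ProbabilityTheory

theorem exactly_one_spiked_column_prob_bound
    (Ω : Type*) [MeasureSpace Ω] [IsProbabilityMeasure (ℙ : Measure Ω)]
    (d m : ℕ) (hd : 1 ≤ d) (hm : 1 ≤ m)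
    (π : ℝ) (hπ0 : 0 < π) (hπhalf : π < 1 / 2)
    (hπm : (d : ℝ) * π ^ m = 1)
    -- component labels: 0 ↦ N(-B,1), 1 ↦ N(0,1), 2 ↦ N(B,1)
    (L : Fin d × Fin m → Ω → Fin 3)
    (hmeas : ∀ p, Measurable (L p))
    (hindep : iIndepFun L ℙ)
    (hneg : ∀ p, ℙ {ω | L p ω = 0} = ENNReal.ofReal π)
    (hmid : ∀ p, ℙ {ω | L p ω = 1} = ENNReal.ofReal (1 - 2 * π))
    (hpos : ∀ p, ℙ {ω | L p ω = 2} = ENNReal.ofReal π)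
    (N N' : Fin d → Ω → ℕ)
    (hN : ∀ j ω, N j ω = (Finset.univ.filter fun i : Fin m => L (j, i) ω = 2).card)
    (hN' : ∀ j ω, N' j ω = (Finset.univ.filter fun i : Fin m => L (j, i) ω = 1).card) :
    ENNReal.ofReal ((1 - 1 / (d : ℝ)) ^ (d - 1)) ≤
      ℙ {ω | ∃! j : Fin d, N j ω = m ∧
        ∀ ℓ : Fin d, ℓ ≠ j → (m : ℝ) - 2 * π * m * d ≤ (N' ℓ ω : ℝ)} := by
  classical
  have hd0 : (0:ℝ) < (d:ℝ) := by exact_mod_cast hd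
  have hnn : (0:ℝ) ≤ 1 - 1 / (d:ℝ) := by
    rw [sub_nonneg, div_le_one hd0]; exact_mod_cast hd
  have hπm' : π ^ m = 1 / (d:ℝ) := by field_simp at hπm ⊢; linarith
  -- the N' condition is vacuous
  have hπd : (1:ℝ) ≤ π * d := by
    have h1 : π ^ m ≤ π := by
      calc π ^ m ≤ π ^ 1 := pow_le_pow_of_le_one hπ0.le (by linarith) hm
        _ = π := pow_one π
    rw [hπm'] at h1
    exact (div_le_iff₀ hd0).mp h1
  have hvac : ∀ x : ℕ, (m : ℝ) - 2 * π * m * d ≤ (x : ℝ) := by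
    intro x
    have hx : (0:ℝ) ≤ x := Nat.cast_nonneg x
    have hm1 : (1:ℝ) ≤ m := by exact_mod_cast hm
    nlinarith [mul_le_mul_of_nonneg_left hπd (by linarith : (0:ℝ) ≤ 2 * m)]
  -- column all-2 events
  set A : Fin d → Set Ω := fun j => ⋂ i : Fin m, L (j, i) ⁻¹' {2} with hA
  have hNA : ∀ j ω, N j ω = m ↔ ω ∈ A j := by
    intro j ω
    constructor
    · intro h
      have := (hN j ω).symm.trans h
      have huniv : (Finset.univ.filter fun i : Fin m => L (j, i) ω = 2) = Finset.univ := by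
        apply Finset.eq_univ_of_card
        simpa using this
      simp only [hA, Set.mem_iInter, Set.mem_preimage, Set.mem_singleton_iff]
      intro i
      have : i ∈ Finset.univ.filter fun i : Fin m => L (j, i) ω = 2 := by
        rw [huniv]; exact Finset.mem_univ i
      exact (Finset.mem_filter.mp this).2
    · intro h
      simp only [hA, Set.mem_iInter, Set.mem_preimage, Set.mem_singleton_iff] at h
      rw [hN]
      have : (Finset.univ.filter fun i : Fin m => L (j, i) ω = 2) = Finset.univ :=
        Finset.eq_univ_of_forall fun i => Finset.mem_filter.mpr ⟨Finset.mem_univ i, h i⟩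
      rw [this]; simp
  -- key product formula over columns
  have hcol : ∀ (T : Finset (Fin d)) (s : Fin d → Fin m → Set (Fin 3)),
      ℙ (⋂ j ∈ T, ⋂ i : Fin m, L (j, i) ⁻¹' (s j i))
        = ∏ j ∈ T, ∏ i : Fin m, ℙ (L (j, i) ⁻¹' (s j i)) := by
    intro T s
    have h1 : (⋂ j ∈ T, ⋂ i : Fin m, L (j, i) ⁻¹' (s j i))
        = ⋂ p ∈ T ×ˢ (Finset.univ : Finset (Fin m)), L p ⁻¹' (s p.1 p.2) := by
      ext ω
      simp only [Set.mem_iInter, Finset.mem_product, Finset.mem_univ, and_true]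
      exact ⟨fun h p hp => h p.1 hp p.2, fun h p hp i => h (p, i) hp⟩
    rw [h1, hindep.meas_biInter (fun p _ => ⟨s p.1 p.2, trivial, rfl⟩), Finset.prod_product]
  -- probability of a column being all 2's
  have pA : ∀ j, ℙ (A j) = ENNReal.ofReal (1 / (d:ℝ)) := by
    intro j
    have := hcol {j} (fun _ _ => ({2} : Set (Fin 3)))
    simp only [Finset.mem_singleton, Set.iInter_iInter_eq_left, Finset.prod_singleton] at this
    show ℙ (⋂ i : Fin m, L (j, i) ⁻¹' ({2} : Set (Fin 3))) = _
    rw [this]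
    have hp2 : ∀ i : Fin m, ℙ (L (j, i) ⁻¹' ({2} : Set (Fin 3))) = ENNReal.ofReal π := by
      intro i
      exact hpos (j, i)
    rw [Finset.prod_congr rfl fun i _ => hp2 i, Finset.prod_const]
    simp only [Finset.card_univ, Fintype.card_fin]
    rw [← ENNReal.ofReal_pow hπ0.le, hπm']
  -- column σ-algebras and their independence
  set Ps : Fin d → Set (Set Ω) :=
    fun j => {t | ∃ s : Fin m → Set (Fin 3), t = ⋂ i : Fin m, L (j, i) ⁻¹' (s i)} with hPs
  have h_pi : ∀ j, IsPiSystem (Ps j) := by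
    rintro j t1 ⟨s1, rfl⟩ t2 ⟨s2, rfl⟩ -
    refine ⟨fun i => s1 i ∩ s2 i, ?_⟩
    ext ω
    simp only [Set.mem_inter_iff, Set.mem_iInter, Set.mem_preimage, forall_and]
  set M : Fin d → MeasurableSpace Ω := fun j => MeasurableSpace.generateFrom (Ps j) with hM
  have h_le : ∀ j, M j ≤ (by infer_instance : MeasurableSpace Ω) := by
    intro j
    apply MeasurableSpace.generateFrom_le
    rintro t ⟨s, rfl⟩
    exact MeasurableSet.iInter fun i => hmeas (j, i) trivial
  have h_ind : iIndepSets Ps ℙ := by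
    rw [iIndepSets_iff]
    intro T f hf
    choose s hs using fun j (h : j ∈ T) => hf j h
    have h1 : (⋂ j ∈ T, f j) = ⋂ j ∈ T, ⋂ i : Fin m,
        L (j, i) ⁻¹' ((if h : j ∈ T then s j h else fun _ => Set.univ) i) := by
      apply Set.iInter₂_congr
      intro j hj
      rw [dif_pos hj, ← hs j hj]
    rw [h1, hcol T (fun j => if h : j ∈ T then s j h else fun _ => Set.univ)]
    apply Finset.prod_congr rfl
    intro j hj
    have := hcol {j} (fun _ => if h : j ∈ T then s j h else fun _ => Set.univ)
    simp only [Finset.mem_singleton, Set.iInter_iInter_eq_left, Finset.prod_singleton] at this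
    rw [← this, dif_pos hj, ← hs j hj]
  have hMindep : iIndep M ℙ :=
    iIndepSets.iIndep h_le Ps h_pi (fun _ => rfl) h_ind
  have hAmemM : ∀ j, MeasurableSet[M j] (A j) :=
    fun j => MeasurableSpace.measurableSet_generateFrom ⟨fun _ => {2}, rfl⟩
  have hAmeas : ∀ j, MeasurableSet (A j) := fun j => h_le j _ (hAmemM j)
  -- per-column "unique winner" events
  set E : Fin d → Set Ω := fun j0 => ⋂ ℓ, (if ℓ = j0 then A j0 else (A ℓ)ᶜ) with hE
  have hEmeas : ∀ j0, MeasurableSet (E j0) := by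
    intro j0
    apply MeasurableSet.iInter
    intro ℓ
    by_cases h : ℓ = j0 <;> simp [h, hAmeas, (hAmeas ℓ).compl]
  have hAc : ∀ ℓ, ℙ ((A ℓ)ᶜ) = ENNReal.ofReal (1 - 1 / (d:ℝ)) := by
    intro ℓ
    rw [prob_compl_eq_one_sub (hAmeas ℓ), pA ℓ,
      ENNReal.ofReal_sub _ (by positivity), ENNReal.ofReal_one]
  have hpE : ∀ j0, ℙ (E j0)
      = ENNReal.ofReal (1 / (d:ℝ)) * ENNReal.ofReal (1 - 1 / (d:ℝ)) ^ (d - 1) := by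
    intro j0
    have := hMindep.meas_iInter (s := fun ℓ => if ℓ = j0 then A j0 else (A ℓ)ᶜ) (fun ℓ => by
      by_cases h : ℓ = j0
      · rw [if_pos h, ← h]; exact hAmemM ℓ
      · simp only [h, if_false]; exact (hAmemM ℓ).compl)
    rw [hE, this, ← Finset.mul_prod_erase Finset.univ _ (Finset.mem_univ j0)]
    simp only [if_true]
    congr 1
    · exact pA j0
    · rw [Finset.prod_congr rfl (fun ℓ hℓ => by
        rw [if_neg (Finset.mem_erase.mp hℓ).1, hAc ℓ]), Finset.prod_const,
        Finset.card_erase_of_mem (Finset.mem_univ j0), Finset.card_univ, Fintype.card_fin]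
  -- the E j0 are pairwise disjoint
  have hdisj : Pairwise (Function.onFun Disjoint E) := by
    intro j k hjk
    rw [Function.onFun, Set.disjoint_left]
    intro ω hωj hωk
    have h1 : ω ∈ A j := by
      have := Set.mem_iInter.mp hωj j; simpa using this
    have h2 : ω ∈ (A j)ᶜ := by
      have := Set.mem_iInter.mp hωk j; simpa [hjk] using this
    exact h2 h1
  -- union of E's is inside the target event
  have hsub : (⋃ j0, E j0) ⊆ {ω | ∃! j : Fin d, N j ω = m ∧
      ∀ ℓ : Fin d, ℓ ≠ j → (m : ℝ) - 2 * π * m * d ≤ (N' ℓ ω : ℝ)} := by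
    rintro ω ⟨_, ⟨j0, rfl⟩, hω⟩
    refine ⟨j0, ⟨?_, fun ℓ _ => hvac _⟩, ?_⟩
    · rw [hNA]
      have := Set.mem_iInter.mp hω j0; simpa using this
    · rintro k ⟨hk, -⟩
      by_contra hne
      have h1 : ω ∈ (A k)ᶜ := by
        have := Set.mem_iInter.mp hω k; simpa [hne] using this
      exact h1 ((hNA k ω).mp hk)
  -- put it together
  have hunion : ℙ (⋃ j0, E j0) = ENNReal.ofReal ((1 - 1 / (d:ℝ)) ^ (d - 1)) := by
    rw [measure_iUnion hdisj hEmeas]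
    simp only [hpE, tsum_fintype, Finset.sum_const, Finset.card_univ, Fintype.card_fin,
      nsmul_eq_mul]
    rw [← mul_assoc]
    have hone : (d : ENNReal) * ENNReal.ofReal (1 / (d:ℝ)) = 1 := by
      rw [← ENNReal.ofReal_natCast d, ← ENNReal.ofReal_mul (Nat.cast_nonneg d)]
      rw [mul_one_div, div_self (ne_of_gt hd0), ENNReal.ofReal_one]
    rw [hone, one_mul, ← ENNReal.ofReal_pow hnn]
  calc ENNReal.ofReal ((1 - 1 / (d:ℝ)) ^ (d - 1)) = ℙ (⋃ j0, E j0) := hunion.symm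
    _ ≤ _ := measure_mono hsub
end
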